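/- arXiv:2504.07503 — 2 statements merged into one kernel-verified Lean document; each statement's English description precedes it below -/
import Mathlib

section
/- Let B ∈ ℝ^{m×n} be a matrix such that: (i) there is a column index j₀ so that every column of B other than column j₀ contains at most one nonzero entry, and (ii) for every row index i and every sign vector ε ∈ {−1,1}^n, ∑_{j=1}^n ε_j B_{ij} ≠ 0. Then the linear functional f(k) = ∑_{i=1}^m k_i B_{i j₀} is a characteristic linear function of the L1 minimization problem: for every a ∈ ℝ^n and any two minimizers k¹, k² ∈ O_a, one has ∑_{i=1}^m k¹_i B_{i j₀} = ∑_{i=1}^m k²_i B_{i j₀}. -/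
lemma rowQ {n : ℕ} (r b : Fin n → ℝ) (H : ∀ j, r j = 0 → b j = 0)
    (hopt : ∀ t : ℝ, ∑ j, |r j| ≤ ∑ j, |r j - t * b j|) :
    ∑ j, (if 0 ≤ r j then (1:ℝ) else -1) * b j = 0 := by
  set ε : Fin n → ℝ := fun j => if 0 ≤ r j then (1:ℝ) else -1 with hε
  set Q : ℝ := ∑ j, ε j * b j with hQdef
  have key : ∀ t : ℝ, (∀ j, r j ≠ 0 → |t * b j| ≤ |r j|) → t * Q ≤ 0 := by
    intro t ht
    have hsum : ∑ j, |r j - t * b j| = ∑ j, |r j| - t * Q := by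
      rw [hQdef, Finset.mul_sum, ← Finset.sum_sub_distrib]
      apply Finset.sum_congr rfl
      intro j _
      by_cases hr : r j = 0
      · simp [hr, H j hr]
      · have hepm : ε j = 1 ∨ ε j = -1 := by
          by_cases h : 0 ≤ r j <;> simp [hε, h]
        have hej : ε j * r j = |r j| := by
          rcases lt_or_ge (r j) 0 with h | h
          · simp [hε, not_le.mpr h, abs_of_neg h]
          · simp [hε, h, abs_of_nonneg h]
        have hbound : ε j * (t * b j) ≤ |t * b j| := by
          rcases hepm with h | h
          · rw [h, one_mul]; exact le_abs_self _
          · rw [h, neg_one_mul]; exact neg_le_abs _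
        have h1 : 0 ≤ ε j * (r j - t * b j) := by
          have : ε j * (r j - t * b j) = |r j| - ε j * (t * b j) := by
            rw [← hej]; ring
          rw [this]
          linarith [ht j hr]
        have habs : |r j - t * b j| = ε j * (r j - t * b j) := by
          rcases hepm with h | h
          · rw [h, one_mul] at h1 ⊢; exact abs_of_nonneg h1
          · rw [h, neg_one_mul] at h1 ⊢
            rw [abs_of_nonpos (by linarith)]
        rw [habs, ← hej]; ring
    have := hopt t
    rw [hsum] at this
    linarith
  by_cases hS : (Finset.univ.filter (fun j => r j ≠ 0)).Nonempty
  · set M : ℝ := 1 + ∑ j, |b j| with hM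
    have hMpos : 0 < M := by
      have : 0 ≤ ∑ j, |b j| := Finset.sum_nonneg fun j _ => abs_nonneg _
      rw [hM]; linarith
    set ρ : ℝ := (Finset.univ.filter (fun j => r j ≠ 0)).inf' hS (fun j => |r j|) with hρ
    have hρpos : 0 < ρ := by
      rw [hρ, Finset.lt_inf'_iff]
      intro j hj
      simp only [Finset.mem_filter] at hj
      exact abs_pos.mpr hj.2
    set c : ℝ := ρ / M with hc
    have hcpos : 0 < c := div_pos hρpos hMpos
    have hsmall : ∀ t : ℝ, |t| ≤ c → ∀ j, r j ≠ 0 → |t * b j| ≤ |r j| := by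
      intro t htc j hj
      have h1 : |b j| ≤ M := by
        have : |b j| ≤ ∑ j, |b j| :=
          Finset.single_le_sum (fun j _ => abs_nonneg (b j)) (Finset.mem_univ j)
        rw [hM]; linarith
      have h2 : ρ ≤ |r j| := Finset.inf'_le _ (by simp [hj])
      calc |t * b j| = |t| * |b j| := abs_mul _ _
        _ ≤ c * M := mul_le_mul htc h1 (abs_nonneg _) (le_of_lt hcpos)
        _ = ρ := by rw [hc]; field_simp
        _ ≤ |r j| := h2
    have h1 := key c (hsmall c (by rw [abs_of_pos hcpos]) )
    have h2 := key (-c) (hsmall (-c) (by rw [abs_neg, abs_of_pos hcpos]))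
    have hcQ : c * Q = 0 := le_antisymm h1 (by nlinarith)
    rcases mul_eq_zero.mp hcQ with h | h
    · exact absurd h (ne_of_gt hcpos)
    · exact h
  · apply Finset.sum_eq_zero
    intro j _
    have : r j = 0 := by
      by_contra h
      exact hS ⟨j, by simp [h]⟩
    simp [H j this]


theorem characteristic_column_functional' (m n : ℕ) (B : Matrix (Fin m) (Fin n) ℝ)
    (j₀ : Fin n)
    (hcol : ∀ j : Fin n, j ≠ j₀ → ∀ i₁ i₂ : Fin m, B i₁ j ≠ 0 → B i₂ j ≠ 0 → i₁ = i₂)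
    (hsign : ∀ i : Fin m, ∀ ε : Fin n → ℝ, (∀ j, ε j = 1 ∨ ε j = -1) →
      ∑ j, ε j * B i j ≠ 0)
    (a : Fin n → ℝ) (k₁ k₂ : Fin m → ℝ)
    (hk₁ : ∀ k' : Fin m → ℝ, (∑ j, |a j - ∑ i, k₁ i * B i j|) ≤ ∑ j, |a j - ∑ i, k' i * B i j|)
    (hk₂ : ∀ k' : Fin m → ℝ, (∑ j, |a j - ∑ i, k₂ i * B i j|) ≤ ∑ j, |a j - ∑ i, k' i * B i j|) :
    ∑ i, k₁ i * B i j₀ = ∑ i, k₂ i * B i j₀ := by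
  set r1 : Fin n → ℝ := fun j => a j - ∑ i, k₁ i * B i j with hr1
  set r2 : Fin n → ℝ := fun j => a j - ∑ i, k₂ i * B i j with hr2
  set km : Fin m → ℝ := fun i => (k₁ i + k₂ i) / 2 with hkm
  have hrm : ∀ j, a j - ∑ i, km i * B i j = (r1 j + r2 j) / 2 := by
    intro j
    have h : ∑ i, km i * B i j = ((∑ i, k₁ i * B i j) + ∑ i, k₂ i * B i j) / 2 := by
      rw [← Finset.sum_add_distrib, Finset.sum_div]
      exact Finset.sum_congr rfl fun i _ => by rw [hkm]; ring
    rw [h, hr1, hr2]; ring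
  have hL : (∑ j, |r1 j|) = ∑ j, |r2 j| := le_antisymm (hk₁ k₂) (hk₂ k₁)
  have hle : ∀ j, |(r1 j + r2 j) / 2| ≤ (|r1 j| + |r2 j|) / 2 := by
    intro j
    calc |(r1 j + r2 j) / 2| = |r1 j + r2 j| / 2 := by
          rw [abs_div]; norm_num
      _ ≤ (|r1 j| + |r2 j|) / 2 := by
          have := abs_add_le (r1 j) (r2 j); linarith
  have hmid_eq : (∑ j, |a j - ∑ i, km i * B i j|) = ∑ j, |(r1 j + r2 j) / 2| :=
    Finset.sum_congr rfl fun j _ => by rw [hrm j]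
  have hub : (∑ j, |(r1 j + r2 j) / 2|) ≤ ∑ j, |r1 j| := by
    calc (∑ j, |(r1 j + r2 j) / 2|) ≤ ∑ j, (|r1 j| + |r2 j|) / 2 :=
          Finset.sum_le_sum fun j _ => hle j
      _ = ((∑ j, |r1 j|) + ∑ j, |r2 j|) / 2 := by
          rw [← Finset.sum_add_distrib, Finset.sum_div]
      _ = ∑ j, |r1 j| := by rw [← hL]; ring
  have hlb : (∑ j, |r1 j|) ≤ ∑ j, |(r1 j + r2 j) / 2| := by
    have := hk₁ km; rw [hmid_eq] at this; exact this
  have hopt_mid : ∀ k' : Fin m → ℝ,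
      (∑ j, |(r1 j + r2 j) / 2|) ≤ ∑ j, |a j - ∑ i, k' i * B i j| := by
    intro k'
    calc (∑ j, |(r1 j + r2 j) / 2|) ≤ ∑ j, |r1 j| := hub
      _ ≤ _ := hk₁ k'
  have hterm : ∀ j, |(r1 j + r2 j) / 2| = (|r1 j| + |r2 j|) / 2 := by
    have h0 : ∑ j, ((|r1 j| + |r2 j|) / 2 - |(r1 j + r2 j) / 2|) = 0 := by
      rw [Finset.sum_sub_distrib, ← Finset.sum_div, Finset.sum_add_distrib, ← hL]
      linarith [le_antisymm hub hlb]
    intro j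
    have := (Finset.sum_eq_zero_iff_of_nonneg
      (fun j _ => sub_nonneg.mpr (hle j))).mp h0 j (Finset.mem_univ j)
    linarith
  -- step 3: witness column for each row
  have hwit : ∀ i : Fin m, ∃ j, (r1 j + r2 j) / 2 = 0 ∧ B i j ≠ 0 := by
    intro i
    by_contra hcon
    push_neg at hcon
    have hopt : ∀ t : ℝ, (∑ j, |(r1 j + r2 j) / 2|) ≤
        ∑ j, |(r1 j + r2 j) / 2 - t * B i j| := by
      intro t
      have h := hopt_mid (fun i' => km i' + t * (if i' = i then 1 else 0))
      have e1 : ∀ j, a j - (∑ i', (km i' + t * (if i' = i then 1 else 0)) * B i' j)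
          = (r1 j + r2 j) / 2 - t * B i j := by
        intro j
        have h2 : ∑ i', (km i' + t * (if i' = i then 1 else 0)) * B i' j
            = (∑ i', km i' * B i' j) + t * B i j := by
          have h3 : ∀ i' ∈ Finset.univ, (km i' + t * (if i' = i then 1 else 0)) * B i' j
              = km i' * B i' j + (if i' = i then t * B i' j else 0) := by
            intro i' _
            by_cases hi' : i' = i <;> simp [hi'] <;> ring
          rw [Finset.sum_congr rfl h3, Finset.sum_add_distrib]
          simp
        rw [h2]
        have := hrm j
        linarith
      calc (∑ j, |(r1 j + r2 j) / 2|) ≤ _ := h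
        _ = ∑ j, |(r1 j + r2 j) / 2 - t * B i j| :=
          Finset.sum_congr rfl fun j _ => by rw [e1 j]
    have hQ := rowQ (fun j => (r1 j + r2 j) / 2) (fun j => B i j) hcon hopt
    exact hsign i (fun j => if 0 ≤ (r1 j + r2 j) / 2 then 1 else -1)
      (fun j => by by_cases h : 0 ≤ (r1 j + r2 j) / 2 <;> simp [h]) hQ
  -- step 4: zero midpoint residual forces both residuals zero
  have hzero : ∀ j, (r1 j + r2 j) / 2 = 0 → r1 j = 0 ∧ r2 j = 0 := by
    intro j h
    have ht := hterm j
    rw [h, abs_zero] at ht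
    have h1 : |r1 j| + |r2 j| = 0 := by linarith
    have h2 : |r1 j| = 0 := by
      have := abs_nonneg (r1 j); have := abs_nonneg (r2 j); linarith
    have h3 : |r2 j| = 0 := by
      have := abs_nonneg (r1 j); linarith
    exact ⟨abs_eq_zero.mp h2, abs_eq_zero.mp h3⟩
  -- final assembly
  by_cases hd : ∀ i, k₂ i = k₁ i
  · exact Finset.sum_congr rfl fun i _ => by rw [hd i]
  · push_neg at hd
    obtain ⟨i, hi⟩ := hd
    obtain ⟨j, hj0, hjB⟩ := hwit i
    obtain ⟨h1, h2⟩ := hzero j hj0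
    by_cases hjj : j = j₀
    · subst hjj
      have e1 : a j - ∑ i, k₁ i * B i j = 0 := h1
      have e2 : a j - ∑ i, k₂ i * B i j = 0 := h2
      linarith
    · exfalso
      have hsum : ∑ i', (k₂ i' - k₁ i') * B i' j = (k₂ i - k₁ i) * B i j := by
        apply Finset.sum_eq_single
        · intro i' _ hne
          by_cases hB : B i' j = 0
          · rw [hB, mul_zero]
          · exact absurd (hcol j hjj i' i hB hjB) hne
        · intro h; exact absurd (Finset.mem_univ i) h
      have he : r1 j - r2 j = ∑ i', (k₂ i' - k₁ i') * B i' j := by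
        have h4 : ∑ i', (k₂ i' - k₁ i') * B i' j
            = (∑ i', k₂ i' * B i' j) - ∑ i', k₁ i' * B i' j := by
          rw [← Finset.sum_sub_distrib]
          exact Finset.sum_congr rfl fun i' _ => by ring
        rw [hr1, hr2, h4]
        simp only
        ring
      rw [h1, h2, hsum] at he
      have : k₂ i - k₁ i = 0 := by
        have he' : (k₂ i - k₁ i) * B i j = 0 := by linarith [he]
        rcases mul_eq_zero.mp he' with h | h
        · exact h
        · exact absurd h hjB
      exact hi (by linarith)


/-- The L1 objective `‖a - k B‖₁ = ∑ j, |a j - ∑ i, k i * B i j|`. -/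
def l1Obj {m n : ℕ} (B : Matrix (Fin m) (Fin n) ℝ) (a : Fin n → ℝ) (k : Fin m → ℝ) : ℝ :=
  ∑ j, |a j - ∑ i, k i * B i j|

/-- The optimal set `O_a`: the set of minimizers of the L1 objective. -/
def optSet {m n : ℕ} (B : Matrix (Fin m) (Fin n) ℝ) (a : Fin n → ℝ) : Set (Fin m → ℝ) :=
  {k | ∀ k' : Fin m → ℝ, l1Obj B a k ≤ l1Obj B a k'}

/-- If every column of `B` other than column `j₀` has at most one nonzero entry, and
for every row `i` and every sign vector `ε ∈ {-1,1}^n` the signed sum `∑ j, ε j * B i j`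
is nonzero, then `k ↦ ∑ i, k i * B i j₀` is a characteristic linear function of the
L1 minimization problem: it takes a single value on each optimal set `O_a`. -/
theorem characteristic_column_functional (m n : ℕ) (B : Matrix (Fin m) (Fin n) ℝ)
    (j₀ : Fin n)
    (hcol : ∀ j : Fin n, j ≠ j₀ → ∀ i₁ i₂ : Fin m, B i₁ j ≠ 0 → B i₂ j ≠ 0 → i₁ = i₂)
    (hsign : ∀ i : Fin m, ∀ ε : Fin n → ℝ, (∀ j, ε j = 1 ∨ ε j = -1) →
      ∑ j, ε j * B i j ≠ 0)
    (a : Fin n → ℝ) (k₁ k₂ : Fin m → ℝ)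
    (hk₁ : k₁ ∈ optSet B a) (hk₂ : k₂ ∈ optSet B a) :
    ∑ i, k₁ i * B i j₀ = ∑ i, k₂ i * B i j₀ := by
  exact characteristic_column_functional' m n B j₀ hcol hsign a k₁ k₂ hk₁ hk₂
end

section
/- Let t > 0 and γ > 0 be real numbers with t < (e − 1)γ. Define L : (0,∞) → ℝ by L(α) = γ·α·exp(−α(γ+t)) if α < 1/t, and L(α) = γ·α·exp(−αγ − 1) if α ≥ 1/t. Then L attains its maximum uniquely at α = 1/(t+γ): for every α > 0 with α ≠ 1/(t+γ), L(α) < L(1/(t+γ)) = (γ/(t+γ)) · exp(−1). -/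
lemma xexp_lt (x : ℝ) (hx : x ≠ 1) : x * Real.exp (-x) < Real.exp (-1) := by
  rcases le_or_gt x 0 with h | h
  · have : x * Real.exp (-x) ≤ 0 :=
      mul_nonpos_of_nonpos_of_nonneg h (Real.exp_pos _).le
    exact this.trans_lt (Real.exp_pos _)
  · have h1 : x - 1 ≠ 0 := sub_ne_zero.mpr hx
    have h2 : (x - 1) + 1 < Real.exp (x - 1) := Real.add_one_lt_exp h1
    have h3 : x < Real.exp (x - 1) := by linarith
    calc x * Real.exp (-x) < Real.exp (x - 1) * Real.exp (-x) := by
          exact mul_lt_mul_of_pos_right h3 (Real.exp_pos _)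
      _ = Real.exp (-1) := by rw [← Real.exp_add]; ring_nf

lemma xexp_le (x : ℝ) : x * Real.exp (-x) ≤ Real.exp (-1) := by
  rcases eq_or_ne x 1 with h | h
  · simp [h]
  · exact (xexp_lt x h).le

/-- For `t, γ > 0` with `t < (e − 1)γ`, the posterior single-event likelihood
`L(α) = γ·α·exp(−α(γ+t))` for `α < 1/t` and `L(α) = γ·α·exp(−αγ − 1)` for `α ≥ 1/t`
attains its maximum on `(0,∞)` uniquely at `α = 1/(t+γ)`, with maximal value
`(γ/(t+γ)) · exp(−1)`. -/
theorem posterior_likelihood_max (t γ : ℝ) (ht : 0 < t) (hγ : 0 < γ)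
    (htγ : t < (Real.exp 1 - 1) * γ)
    (L : ℝ → ℝ)
    (hL : ∀ α : ℝ, 0 < α →
      L α = if α < 1 / t then γ * α * Real.exp (-α * (γ + t))
            else γ * α * Real.exp (-α * γ - 1)) :
    L (1 / (t + γ)) = (γ / (t + γ)) * Real.exp (-1) ∧
    ∀ α : ℝ, 0 < α → α ≠ 1 / (t + γ) → L α < L (1 / (t + γ)) := by
  have htγ0 : 0 < t + γ := by linarith
  have hstar_pos : 0 < 1 / (t + γ) := by positivity
  have hstar_lt : 1 / (t + γ) < 1 / t := by
    apply one_div_lt_one_div_of_lt ht; linarith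
  have hval : L (1 / (t + γ)) = (γ / (t + γ)) * Real.exp (-1) := by
    rw [hL _ hstar_pos, if_pos hstar_lt]
    have : -(1 / (t + γ)) * (γ + t) = -1 := by field_simp; ring
    rw [this]; ring
  refine ⟨hval, fun α hα hne => ?_⟩
  rw [hval, hL _ hα]
  by_cases hcase : α < 1 / t
  · rw [if_pos hcase]
    have hx : α * (γ + t) ≠ 1 := by
      intro h
      apply hne
      field_simp
      linarith [h]
    have hkey := xexp_lt (α * (γ + t)) hx
    have h1 : γ * α * Real.exp (-α * (γ + t))
        = (γ / (t + γ)) * (α * (γ + t) * Real.exp (-(α * (γ + t)))) := by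
      field_simp; ring_nf
    rw [h1]
    have hpos : 0 < γ / (t + γ) := by positivity
    exact mul_lt_mul_of_pos_left hkey hpos
  · rw [if_neg hcase]
    have hkey := xexp_le (α * γ)
    have hlt : Real.exp (-1) < γ / (t + γ) := by
      rw [Real.exp_neg, lt_div_iff₀ htγ0]
      have he := Real.exp_pos 1
      have h1 : t + γ < Real.exp 1 * γ := by nlinarith
      nlinarith [mul_lt_mul_of_pos_left h1 (inv_pos.mpr he),
        inv_mul_cancel₀ (ne_of_gt he)]
    have h1 : γ * α * Real.exp (-α * γ - 1)
        = (α * γ * Real.exp (-(α * γ))) * Real.exp (-1) := by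
      rw [show -α * γ - 1 = -(α * γ) + (-1) by ring, Real.exp_add]; ring
    rw [h1]
    calc (α * γ * Real.exp (-(α * γ))) * Real.exp (-1)
        ≤ Real.exp (-1) * Real.exp (-1) :=
          mul_le_mul_of_nonneg_right hkey (Real.exp_pos _).le
      _ < γ / (t + γ) * Real.exp (-1) :=
          mul_lt_mul_of_pos_right hlt (Real.exp_pos _)
end
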